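/- For integers 2 ≤ n ≤ m, it holds that ∑_{k=1}^{n−1} (1/(k+1))·(nm − k(k+1)/2)² > (ln n − 2)·n²m². -/
import Mathlib


theorem stmt10 (n m : ℕ) (hn : 2 ≤ n) (hnm : n ≤ m) :
    (Real.log n - 2) * n ^ 2 * m ^ 2 <
      ∑ k ∈ Finset.Icc 1 (n - 1),
        (1 / ((k : ℝ) + 1)) * ((n : ℝ) * m - k * (k + 1) / 2) ^ 2 := by
  have hn0 : (0:ℝ) < n := by positivity
  have hm0 : (0:ℝ) < m := lt_of_lt_of_le hn0 (by exact_mod_cast hnm)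
  -- termwise lower bound
  have key : ∀ k ∈ Finset.Icc 1 (n-1),
      (n:ℝ)^2*m^2 * (1/((k:ℝ)+1)) - (n:ℝ)*m*k ≤
        (1 / ((k : ℝ) + 1)) * ((n : ℝ) * m - k * (k + 1) / 2) ^ 2 := by
    intro k _
    have hk1 : (0:ℝ) < (k:ℝ)+1 := by positivity
    rw [← sub_nonneg]
    have h : (1 / ((k:ℝ)+1)) * ((n:ℝ)*m - k*(k+1)/2)^2
        - ((n:ℝ)^2*m^2 * (1/((k:ℝ)+1)) - (n:ℝ)*m*k)
        = ((k:ℝ)*(k+1)/2)^2 / ((k:ℝ)+1) := by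
      field_simp
      ring
    rw [h]; positivity
  have hsum := Finset.sum_le_sum key
  rw [Finset.sum_sub_distrib] at hsum
  -- sum of 1/(k+1) equals harmonic n - 1
  have hshift : ∑ k ∈ Finset.Icc 1 (n-1), (1:ℝ)/((k:ℝ)+1)
      = ∑ d ∈ Finset.Icc 2 n, (1:ℝ)/(d:ℝ) := by
    apply Finset.sum_nbij' (fun k => k+1) (fun d => d-1)
    · intro k hk; simp only [Finset.mem_Icc] at *; omega
    · intro d hd; simp only [Finset.mem_Icc] at *; omega
    · intro k hk; simp only [Finset.mem_Icc] at *; omega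
    · intro d hd; simp only [Finset.mem_Icc] at *; omega
    · intro k hk; push_cast; ring
  have hharm : (harmonic n : ℝ) = 1 + ∑ d ∈ Finset.Icc 2 n, (1:ℝ)/(d:ℝ) := by
    have h1 : Finset.Icc 1 n = insert 1 (Finset.Icc 2 n) := by
      ext x; simp only [Finset.mem_Icc, Finset.mem_insert]; omega
    rw [harmonic_eq_sum_Icc, h1]
    push_cast
    rw [Finset.sum_insert (by simp)]
    simp [one_div]
  have hlog : Real.log (n+1) ≤ (harmonic n : ℝ) := by
    have := log_add_one_le_harmonic n
    push_cast at this ⊢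
    exact this
  have hloglt : Real.log n < Real.log (n+1) := by
    apply Real.log_lt_log hn0; linarith
  have hH : Real.log n - 1 < ∑ k ∈ Finset.Icc 1 (n-1), (1:ℝ)/((k:ℝ)+1) := by
    rw [hshift]; linarith [hharm ▸ (hloglt.trans_le hlog)]
  -- sum of k
  have hT : ∑ k ∈ Finset.Icc 1 (n-1), (k:ℝ) ≤ (n:ℝ)*m := by
    have he : ∑ k ∈ Finset.Icc 1 (n-1), k = ∑ k ∈ Finset.range n, k := by
      apply Finset.sum_subset
      · intro x hx; simp only [Finset.mem_Icc, Finset.mem_range] at *; omega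
      · intro x hx hx'; simp only [Finset.mem_Icc, Finset.mem_range] at *; omega
    have hnat : (∑ k ∈ Finset.Icc 1 (n-1), k) * 2 = n * (n-1) := by
      rw [he]; exact Finset.sum_range_id_mul_two n
    have h2 : (∑ k ∈ Finset.Icc 1 (n-1), (k:ℝ)) * 2 = (n:ℝ) * ((n:ℝ)-1) := by
      have := congrArg (Nat.cast : ℕ → ℝ) hnat
      push_cast [Nat.cast_sub (show 1 ≤ n by omega)] at this
      linarith [this]
    have hm' : (n:ℝ) ≤ m := by exact_mod_cast hnm
    nlinarith
  -- combine
  have h1 : (n:ℝ)^2*m^2 * (Real.log n - 1) < (n:ℝ)^2*m^2 * ∑ k ∈ Finset.Icc 1 (n-1), (1:ℝ)/((k:ℝ)+1) := by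
    apply mul_lt_mul_of_pos_left hH (by positivity)
  have h2 : (n:ℝ)*m * (∑ k ∈ Finset.Icc 1 (n-1), (k:ℝ)) ≤ (n:ℝ)*m * ((n:ℝ)*m) :=
    mul_le_mul_of_nonneg_left hT (by positivity)
  have hsum' : (n:ℝ)^2*m^2 * (∑ k ∈ Finset.Icc 1 (n-1), (1:ℝ)/((k:ℝ)+1))
      - (n:ℝ)*m * (∑ k ∈ Finset.Icc 1 (n-1), (k:ℝ))
      ≤ ∑ k ∈ Finset.Icc 1 (n-1), (1 / ((k : ℝ) + 1)) * ((n : ℝ) * m - k * (k + 1) / 2) ^ 2 := by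
    rw [Finset.mul_sum, Finset.mul_sum]
    exact hsum
  nlinarith [hsum', h1, h2]
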